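/- Let T be a finite tree (connected acyclic simple graph) with at least two vertices. If T admits a self-approaching drawing in ℝ², then every vertex of T has degree at most 4. -/

import Mathlib

/-- The point of the polygonal path `p 0, p 1, …` lying on segment `i`
(from `p i` to `p (i+1)`) at fraction `s ∈ [0,1]`. -/
noncomputable def polyPt (p : ℕ → EuclideanSpace ℝ (Fin 2)) (i : ℕ) (s : ℝ) :
    EuclideanSpace ℝ (Fin 2) :=
  (1 - s) • p i + s • p (i + 1)

/-- `(i, s)` comes no later than `(j, t)` in the lexicographic order on parameters
of points of a polygonal path. -/
def ParamLE (i : ℕ) (s : ℝ) (j : ℕ) (t : ℝ) : Prop :=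
  i < j ∨ (i = j ∧ s ≤ t)

/-- The polygonal path on the points `p 0, …, p m` (with `m` segments, indexed
`0, …, m-1`) is self-approaching: for any three of its points `a, b, c` in order
along the path, `dist a c ≥ dist b c`. -/
def IsSelfApproachingPoly (m : ℕ) (p : ℕ → EuclideanSpace ℝ (Fin 2)) : Prop :=
  ∀ (i j k : ℕ) (s t u : ℝ), i < m → j < m → k < m →
    s ∈ Set.Icc (0 : ℝ) 1 → t ∈ Set.Icc (0 : ℝ) 1 → u ∈ Set.Icc (0 : ℝ) 1 →
    ParamLE i s j t → ParamLE j t k u →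
    dist (polyPt p j t) (polyPt p k u) ≤ dist (polyPt p i s) (polyPt p k u)

/-- The polygonal path on the points `p 0, …, p m` has increasing chords: for any
four of its points `a, b, c, d` in order along the path, `dist a d ≥ dist b c`. -/
def IsIncreasingChordsPoly (m : ℕ) (p : ℕ → EuclideanSpace ℝ (Fin 2)) : Prop :=
  ∀ (i j k l : ℕ) (s t u v : ℝ), i < m → j < m → k < m → l < m →
    s ∈ Set.Icc (0 : ℝ) 1 → t ∈ Set.Icc (0 : ℝ) 1 → u ∈ Set.Icc (0 : ℝ) 1 →
    v ∈ Set.Icc (0 : ℝ) 1 →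
    ParamLE i s j t → ParamLE j t k u → ParamLE k u l v →
    dist (polyPt p j t) (polyPt p k u) ≤ dist (polyPt p i s) (polyPt p l v)

/-- A straight-line drawing `ρ` of a graph `G` is self-approaching if `ρ` is injective
and for every ordered pair of distinct vertices `(s, t)` there is a path from `s` to `t`
in `G` whose polygonal drawing under `ρ` is self-approaching. -/
def IsSelfApproachingDrawing {V : Type*} (G : SimpleGraph V)
    (ρ : V → EuclideanSpace ℝ (Fin 2)) : Prop :=
  Function.Injective ρ ∧
  ∀ s t : V, s ≠ t → ∃ w : G.Walk s t, w.IsPath ∧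
    IsSelfApproachingPoly w.length (fun n => ρ (w.getVert n))

open SimpleGraph

open SimpleGraph RealInnerProductSpace

-- three reals with pairwise nonpositive products: one is zero
lemma three_nonpos (p q r : ℝ) (h1 : p*q ≤ 0) (h2 : p*r ≤ 0) (h3 : q*r ≤ 0) :
    p = 0 ∨ q = 0 ∨ r = 0 := by
  by_contra h
  push_neg at h
  obtain ⟨hp, hq, hr⟩ := h
  rcases hp.lt_or_gt with hp|hp <;> rcases hq.lt_or_gt with hq|hq <;>
    rcases hr.lt_or_gt with hr|hr <;> nlinarith

lemma cross_nonpos (x0 y0 xi yi xj yj : ℝ) (h0 : 0 < x0^2+y0^2)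
    (h0i : xi*x0+yi*y0 ≤ 0) (h0j : xj*x0+yj*y0 ≤ 0) (hij : xi*xj+yi*yj ≤ 0) :
    (xi*y0-yi*x0)*(xj*y0-yj*x0) ≤ 0 := by
  nlinarith [mul_nonneg (neg_nonneg.2 h0i) (neg_nonneg.2 h0j),
    mul_nonneg (neg_nonneg.2 hij) h0.le]

lemma final_contra (x0 y0 xi yi xj yj : ℝ) (h0 : 0 < x0^2+y0^2)
    (hi : 0 < xi^2+yi^2) (hj : 0 < xj^2+yj^2)
    (h0i : xi*x0+yi*y0 ≤ 0) (h0j : xj*x0+yj*y0 ≤ 0) (hij : xi*xj+yi*yj ≤ 0)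
    (hbi : xi*y0-yi*x0 = 0) (hbj : xj*y0-yj*x0 = 0) : False := by
  have hai : xi*x0+yi*y0 < 0 := by nlinarith [mul_pos hi h0]
  have haj : xj*x0+yj*y0 < 0 := by nlinarith [mul_pos hj h0]
  nlinarith [mul_pos_of_neg_of_neg hai haj, mul_nonneg (neg_nonneg.2 hij) h0.le]

lemma inner_coords (x y : EuclideanSpace ℝ (Fin 2)) :
    (inner ℝ x y : ℝ) = x 0 * y 0 + x 1 * y 1 := by
  simp [PiLp.inner_apply, RCLike.inner_apply, Fin.sum_univ_two, mul_comm]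

/-- at most 4 pairwise-obtuse nonzero vectors in the plane -/
lemma five_vectors_false (f : Fin 5 → EuclideanSpace ℝ (Fin 2))
    (hne : ∀ i, f i ≠ 0) (hin : ∀ i j, i ≠ j → (inner ℝ (f i) (f j) : ℝ) ≤ 0) :
    False := by
  set x : Fin 5 → ℝ := fun i => f i 0 with hx
  set y : Fin 5 → ℝ := fun i => f i 1 with hy
  have hpos : ∀ i, 0 < x i^2 + y i^2 := by
    intro i
    have h1 : (0:ℝ) < inner ℝ (f i) (f i) := by
      rw [real_inner_self_eq_norm_sq]
      exact pow_pos (norm_pos_iff.mpr (hne i)) 2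
    rw [inner_coords] at h1
    nlinarith
  have hip : ∀ i j, i ≠ j → x i * x j + y i * y j ≤ 0 := by
    intro i j hij
    have := hin i j hij
    rw [inner_coords] at this
    nlinarith
  set b : Fin 5 → ℝ := fun i => x i * y 0 - y i * x 0 with hb
  have hbb : ∀ i j : Fin 5, i ≠ 0 → j ≠ 0 → i ≠ j → b i * b j ≤ 0 := by
    intro i j hi hj hij
    exact cross_nonpos _ _ _ _ _ _ (hpos 0) (hip i 0 hi) (hip j 0 hj) (hip i j hij)
  have fin : ∀ i j : Fin 5, i ≠ 0 → j ≠ 0 → i ≠ j → b i = 0 → b j = 0 → False := by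
    intro i j hi hj hij hbi hbj
    exact final_contra _ _ _ _ _ _ (hpos 0) (hpos i) (hpos j)
      (hip i 0 hi) (hip j 0 hj) (hip i j hij) hbi hbj
  have t1 := three_nonpos _ _ _ (hbb 1 2 (by decide) (by decide) (by decide))
      (hbb 1 3 (by decide) (by decide) (by decide))
      (hbb 2 3 (by decide) (by decide) (by decide))
  rcases t1 with h1 | h2 | h3
  · rcases three_nonpos _ _ _ (hbb 2 3 (by decide) (by decide) (by decide))
        (hbb 2 4 (by decide) (by decide) (by decide))
        (hbb 3 4 (by decide) (by decide) (by decide)) with h|h|h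
    · exact fin 1 2 (by decide) (by decide) (by decide) h1 h
    · exact fin 1 3 (by decide) (by decide) (by decide) h1 h
    · exact fin 1 4 (by decide) (by decide) (by decide) h1 h
  · rcases three_nonpos _ _ _ (hbb 1 3 (by decide) (by decide) (by decide))
        (hbb 1 4 (by decide) (by decide) (by decide))
        (hbb 3 4 (by decide) (by decide) (by decide)) with h|h|h
    · exact fin 2 1 (by decide) (by decide) (by decide) h2 h
    · exact fin 2 3 (by decide) (by decide) (by decide) h2 h
    · exact fin 2 4 (by decide) (by decide) (by decide) h2 h
  · rcases three_nonpos _ _ _ (hbb 1 2 (by decide) (by decide) (by decide))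
        (hbb 1 4 (by decide) (by decide) (by decide))
        (hbb 2 4 (by decide) (by decide) (by decide)) with h|h|h
    · exact fin 3 1 (by decide) (by decide) (by decide) h3 h
    · exact fin 3 2 (by decide) (by decide) (by decide) h3 h
    · exact fin 3 4 (by decide) (by decide) (by decide) h3 h


/-- If the distance from points of the segment `[A, Vv]` to `B` is minimized at `Vv`,
then the angle at `Vv` between `A` and `B` is at least a right angle. -/
lemma seg_inner {E : Type*} [NormedAddCommGroup E] [InnerProductSpace ℝ E]
    (A Vv B : E) (hAV : A ≠ Vv)
    (h : ∀ s ∈ Set.Icc (0:ℝ) 1, dist Vv B ≤ dist ((1-s)•A + s•Vv) B) :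
    (inner ℝ (A - Vv) (B - Vv) : ℝ) ≤ 0 := by
  set d := A - Vv with hd
  set x := Vv - B with hxdef
  have hgoal : (inner ℝ d (B - Vv) : ℝ) = - inner ℝ d x := by
    rw [show B - Vv = -x by rw [hxdef]; abel, inner_neg_right]
  rw [hgoal]
  suffices hpos : 0 ≤ (inner ℝ d x : ℝ) by linarith
  by_contra hc
  push_neg at hc
  have h' : ∀ t ∈ Set.Icc (0:ℝ) 1, ‖x‖ ≤ ‖x + t • d‖ := by
    intro t ht
    have h2 := h (1-t) ⟨by linarith [ht.2], by linarith [ht.1]⟩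
    rw [dist_eq_norm, dist_eq_norm] at h2
    have hrw : (1-(1-t))•A + (1-t)•Vv - B = x + t•d := by
      rw [hxdef, hd]; module
    rw [hrw] at h2
    exact h2
  have hdne : d ≠ 0 := sub_ne_zero.2 hAV
  have hdn : 0 < ‖d‖^2 := pow_pos (norm_pos_iff.mpr hdne) 2
  set t := min 1 (-(inner ℝ d x : ℝ) / ‖d‖^2) with htdef
  have ht0 : 0 < t := lt_min one_pos (div_pos (neg_pos.2 hc) hdn)
  have ht1 : t ≤ 1 := min_le_left _ _
  have h2 := h' t ⟨ht0.le, ht1⟩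
  have hsq : ‖x + t•d‖^2 = ‖x‖^2 + 2*(t*(inner ℝ x d : ℝ)) + t^2*‖d‖^2 := by
    rw [norm_add_sq_real, real_inner_smul_right, norm_smul]
    simp [Real.norm_eq_abs, mul_pow, sq_abs]
  have hle : ‖x‖^2 ≤ ‖x+t•d‖^2 := by
    have := norm_nonneg x
    nlinarith
  have htc : t * ‖d‖^2 ≤ -(inner ℝ d x : ℝ) := by
    have := min_le_right 1 (-(inner ℝ d x : ℝ) / ‖d‖^2)
    rw [← htdef] at this
    calc t * ‖d‖^2 ≤ (-(inner ℝ d x : ℝ) / ‖d‖^2) * ‖d‖^2 :=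
          mul_le_mul_of_nonneg_right this hdn.le
      _ = -(inner ℝ d x : ℝ) := by field_simp
  have hcomm : (inner ℝ x d : ℝ) = inner ℝ d x := (real_inner_comm x d).symm
  nlinarith [mul_le_mul_of_nonneg_left htc ht0.le]

/-- In a tree with a self-approaching drawing, edge vectors at a common vertex
make pairwise non-acute angles. -/
lemma adj_inner_nonpos {V : Type*} (G : SimpleGraph V) (hT : G.IsTree)
    (ρ : V → EuclideanSpace ℝ (Fin 2)) (hρ : IsSelfApproachingDrawing G ρ)
    {v a b : V} (hva : G.Adj v a) (hvb : G.Adj v b) (hab : a ≠ b) :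
    (inner ℝ (ρ a - ρ v) (ρ b - ρ v) : ℝ) ≤ 0 := by
  obtain ⟨w, hw, hsa⟩ := hρ.2 a b hab
  set P : G.Walk a b := Walk.cons hva.symm (Walk.cons hvb Walk.nil) with hPdef
  have hP : P.IsPath := by
    rw [hPdef]
    refine Walk.IsPath.cons (Walk.IsPath.cons (Walk.IsPath.nil) ?_) ?_
    · simp [hvb.ne]
    · simp [hva.ne', hab]
  have hwP : w = P := (hT.existsUnique_path a b).unique hw hP
  subst hwP
  have hlen : P.length = 2 := rfl
  have hg0 : P.getVert 0 = a := rfl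
  have hg1 : P.getVert 1 = v := rfl
  have hg2 : P.getVert 2 = b := rfl
  rw [hlen] at hsa
  have key : ∀ s ∈ Set.Icc (0:ℝ) 1,
      dist (ρ v) (ρ b) ≤ dist ((1-s) • ρ a + s • ρ v) (ρ b) := by
    intro s hs
    have := hsa 0 1 1 s 0 1 (by norm_num) (by norm_num) (by norm_num) hs
      (by norm_num) (by norm_num) (Or.inl (by norm_num)) (Or.inr ⟨rfl, by norm_num⟩)
    simpa [polyPt, hg0, hg1, hg2] using this
  exact seg_inner (ρ a) (ρ v) (ρ b) (fun h => hva.ne' (hρ.1 h)) key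

/-- In any self-approaching drawing of a finite tree with at least two vertices,
every vertex has degree at most 4. -/
theorem selfApproachingDrawing_tree_maxDegree_le_four
    {V : Type*} [Fintype V] (G : SimpleGraph V) (hT : G.IsTree)
    (hcard : 2 ≤ Fintype.card V)
    (ρ : V → EuclideanSpace ℝ (Fin 2)) (hρ : IsSelfApproachingDrawing G ρ) :
    ∀ v : V, (G.neighborSet v).ncard ≤ 4 := by
  classical
  intro v
  by_contra hcon
  push_neg at hcon
  have h5 : 5 ≤ (G.neighborSet v).toFinset.card := by
    rw [← Set.ncard_eq_toFinset_card']
    omega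
  obtain ⟨t, hts, ht5⟩ := Finset.exists_subset_card_eq h5
  set l := t.toList with hl
  have hlen : l.length = 5 := by rw [hl, Finset.length_toList, ht5]
  have hnd : l.Nodup := Finset.nodup_toList t
  set f : Fin 5 → V := fun i => l.get (Fin.cast hlen.symm i) with hf
  have finj : Function.Injective f := by
    intro i j hij
    have := (List.nodup_iff_injective_get.1 hnd) hij
    exact Fin.cast_injective _ this
  have fadj : ∀ i, G.Adj v (f i) := by
    intro i
    have : f i ∈ l := List.get_mem l (Fin.cast hlen.symm i)
    rw [hl, Finset.mem_toList] at this
    have := hts this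
    rw [Set.mem_toFinset] at this
    exact this
  exact five_vectors_false (fun i => ρ (f i) - ρ v)
    (fun i => sub_ne_zero.2 (fun h => (fadj i).ne' (hρ.1 h)))
    (fun i j hij => adj_inner_nonpos G hT ρ hρ (fadj i) (fadj j)
      (fun h => hij (finj h)))
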